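/- Let λ > 0 and let n ≥ 2 be an integer. Define L_λ(x) = (e^{−λ}/(1 − e^{−λ}))( e^{λ e^{−x}} − 1 ), P_λ(k) = e^{−λ} λ^k / ((1 − e^{−λ}) k!), and P*_λ(k) = e^{−λ} λ^{k−1}/(k−1)!. Then ∑_{k=1}^∞ ( ∫₀^∞ e^{−2kx} L_λ(x)^{n−2} dx ) · P_λ(k) · P*_λ(k) = (e^{−nλ}/(1 − e^{−λ})^{n−1}) · ∫₀^1 I₁(2λy) (e^{λy} − 1)^{n−2} dy. -/

import Mathlib

open MeasureTheory ProbabilityTheory Real Filter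
open scoped ENNReal NNReal

/-- Modified Bessel function of the first kind of order 0, via its power series. -/
noncomputable def besselI0 (z : ℝ) : ℝ :=
  ∑' k : ℕ, (z / 2) ^ (2 * k) / ((Nat.factorial k : ℝ)) ^ 2

/-- Modified Bessel function of the first kind of order 1, via its power series. -/
noncomputable def besselI1 (z : ℝ) : ℝ :=
  (z / 2) * ∑' k : ℕ, (z / 2) ^ (2 * k) / ((Nat.factorial k : ℝ) * (Nat.factorial (k + 1) : ℝ))

/-- Probability mass function of the zero-truncated Poisson distribution ZTP(λ). -/
noncomputable def ztpPmf (lam : ℝ) (k : ℕ) : ℝ :=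
  if k = 0 then 0
  else Real.exp (-lam) * lam ^ k / ((1 - Real.exp (-lam)) * (Nat.factorial k : ℝ))

/-- Probability mass function of the size-biased distribution associated with ZTP(λ). -/
noncomputable def sizeBiasedPmf (lam : ℝ) (k : ℕ) : ℝ :=
  if k = 0 then 0
  else Real.exp (-lam) * lam ^ (k - 1) / (Nat.factorial (k - 1) : ℝ)

/-- Laplace transform of the ZTP(λ) distribution. -/
noncomputable def ztpLaplace (lam x : ℝ) : ℝ :=
  (Real.exp (-lam) / (1 - Real.exp (-lam))) * (Real.exp (lam * Real.exp (-x)) - 1)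

lemma image_exp_neg : (fun x : ℝ => Real.exp (-x)) '' Set.Ioi 0 = Set.Ioo 0 1 := by
  ext y
  constructor
  · rintro ⟨x, hx, rfl⟩
    refine ⟨Real.exp_pos _, ?_⟩
    have : (-x : ℝ) < 0 := by simpa using (by exact hx : (0:ℝ) < x)
    simpa using Real.exp_lt_one_iff.mpr this
  · rintro ⟨h0, h1⟩
    refine ⟨-Real.log y, ?_, by simp [Real.exp_log h0]⟩
    have := Real.log_neg h0 h1
    simpa using this

lemma subst_exp_neg (g : ℝ → ℝ) :
    ∫ y in Set.Ioo (0:ℝ) 1, g y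
      = ∫ x in Set.Ioi (0:ℝ), Real.exp (-x) * g (Real.exp (-x)) := by
  have hderiv : ∀ x ∈ Set.Ioi (0:ℝ),
      HasDerivWithinAt (fun x : ℝ => Real.exp (-x)) (-Real.exp (-x)) (Set.Ioi 0) x := by
    intro x _
    have h := ((Real.hasDerivAt_exp (-x)).comp x (hasDerivAt_neg x))
    simpa [mul_comm, Function.comp_def] using h.hasDerivWithinAt
  have hinj : Set.InjOn (fun x : ℝ => Real.exp (-x)) (Set.Ioi 0) := by
    intro a _ b _ h
    have := Real.exp_injective h
    linarith [neg_injective this]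
  rw [← image_exp_neg,
    integral_image_eq_integral_abs_deriv_smul measurableSet_Ioi hderiv hinj g]
  refine setIntegral_congr_fun measurableSet_Ioi fun x _ => ?_
  rw [abs_neg, abs_of_pos (Real.exp_pos _), smul_eq_mul]

lemma bessel_series (lam y : ℝ) :
    ∑' m : ℕ, lam ^ (2*m+1) / ((Nat.factorial m : ℝ) * (Nat.factorial (m+1) : ℝ)) * y ^ (2*m+1)
      = besselI1 (2 * lam * y) := by
  rw [besselI1]
  have h2 : 2 * lam * y / 2 = lam * y := by ring
  rw [h2, ← tsum_mul_left]
  refine tsum_congr fun m => ?_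
  rw [mul_pow]
  ring

lemma summable_aux {lam : ℝ} (hlam : 0 < lam) :
    Summable (fun m : ℕ => lam ^ (2*m+1) / ((Nat.factorial m : ℝ) * (Nat.factorial (m+1) : ℝ))) := by
  have hb : Summable (fun m : ℕ => lam * ((lam ^ 2) ^ m / (Nat.factorial m : ℝ))) :=
    (Real.summable_pow_div_factorial (lam ^ 2)).mul_left lam
  refine Summable.of_nonneg_of_le (fun m => by positivity) (fun m => ?_) hb
  have h1 : lam * ((lam ^ 2) ^ m / (Nat.factorial m : ℝ)) = lam ^ (2*m+1) / (Nat.factorial m : ℝ) := by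
    rw [← pow_mul]
    ring
  rw [h1]
  have hfm : (0:ℝ) < (Nat.factorial m : ℝ) := by exact_mod_cast m.factorial_pos
  have hfm1 : (1:ℝ) ≤ (Nat.factorial (m+1) : ℝ) := by exact_mod_cast (m+1).factorial_pos
  rw [div_le_div_iff₀ (by positivity) hfm]
  have hnum : (0:ℝ) ≤ lam ^ (2*m+1) := by positivity
  nlinarith [mul_le_mul_of_nonneg_left hfm1 (le_of_lt hfm), hnum,
    mul_le_mul_of_nonneg_left (mul_le_mul_of_nonneg_left hfm1 (le_of_lt hfm)) hnum]

theorem expectation_g_diag (lam : ℝ) (hlam : 0 < lam) (n : ℕ) (hn : 2 ≤ n) :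
    ∑' k : ℕ, (∫ x in Set.Ioi (0 : ℝ),
          Real.exp (-(2 * (k : ℝ) * x)) * (ztpLaplace lam x) ^ (n - 2)) *
        ztpPmf lam k * sizeBiasedPmf lam k
      = (Real.exp (-(n : ℝ) * lam) / (1 - Real.exp (-lam)) ^ (n - 1)) *
          ∫ y in (0 : ℝ)..1, besselI1 (2 * lam * y) * (Real.exp (lam * y) - 1) ^ (n - 2) := by
  obtain ⟨p, rfl⟩ : ∃ p, n = p + 2 := ⟨n - 2, by omega⟩
  have h2 : p + 2 - 2 = p := rfl
  have h1 : p + 2 - 1 = p + 1 := rfl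
  rw [h2, h1]
  have hE1 : Real.exp (-lam) < 1 := Real.exp_lt_one_iff.mpr (by linarith)
  have hD : 0 < 1 - Real.exp (-lam) := by linarith
  set E : ℝ := Real.exp (-lam) with hE
  set D : ℝ := 1 - Real.exp (-lam) with hDdef
  set G : ℝ → ℝ := fun y => (Real.exp (lam * y) - 1) ^ p with hG
  set F : ℕ → ℝ := fun m => ∫ y in Set.Ioo (0:ℝ) 1, y ^ (2*m+1) * G y with hF
  set a : ℕ → ℝ := fun m =>
    lam ^ (2*m+1) / ((Nat.factorial m : ℝ) * (Nat.factorial (m+1) : ℝ)) with ha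
  set K : ℝ := Real.exp (-((p + 2 : ℕ) : ℝ) * lam) / D ^ (p+1) with hK
  set t : ℕ → ℝ := fun k => (∫ x in Set.Ioi (0 : ℝ),
          Real.exp (-(2 * (k : ℝ) * x)) * (ztpLaplace lam x) ^ p) *
        ztpPmf lam k * sizeBiasedPmf lam k with htdef
  -- The value of K in terms of E and D
  have hKval : K = E ^ (p+2) / D ^ (p+1) := by
    rw [hK, hE]
    congr 1
    rw [← Real.exp_nat_mul]
    congr 1
    push_cast
    ring
  -- per-term computation
  have hterm : ∀ m : ℕ, t (m+1) = K * (a m * F m) := by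
    intro m
    have hsub : (∫ x in Set.Ioi (0 : ℝ),
          Real.exp (-(2 * ((m+1 : ℕ) : ℝ) * x)) * (ztpLaplace lam x) ^ p)
        = (E / D) ^ p * F m := by
      have heq : ∀ x ∈ Set.Ioi (0:ℝ),
          Real.exp (-(2 * ((m+1 : ℕ) : ℝ) * x)) * (ztpLaplace lam x) ^ p
            = Real.exp (-x) * ((Real.exp (-x)) ^ (2*m+1) *
                ((E / D) * (Real.exp (lam * Real.exp (-x)) - 1)) ^ p) := by
        intro x _
        have hpow : Real.exp (-x) * (Real.exp (-x)) ^ (2*m+1)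
            = Real.exp (-(2 * ((m+1 : ℕ) : ℝ) * x)) := by
          rw [← pow_succ']
          rw [← Real.exp_nat_mul]
          congr 1
          push_cast
          ring
        rw [ztpLaplace, ← mul_assoc, hpow, hE, hDdef]
      rw [setIntegral_congr_fun measurableSet_Ioi heq,
        ← subst_exp_neg (fun y => y ^ (2*m+1) * ((E / D) * (Real.exp (lam * y) - 1)) ^ p)]
      have hfun : (fun y : ℝ => y ^ (2*m+1) * ((E / D) * (Real.exp (lam * y) - 1)) ^ p)
          = fun y : ℝ => (E / D) ^ p * (y ^ (2*m+1) * G y) := by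
        funext y
        rw [hG, mul_pow]
        ring
      rw [hfun, integral_const_mul, hF]
    have hpmfz : ztpPmf lam (m+1) = E * lam ^ (m+1) / (D * (Nat.factorial (m+1) : ℝ)) := by
      rw [ztpPmf, if_neg (Nat.succ_ne_zero m), hE, hDdef]
    have hpmfs : sizeBiasedPmf lam (m+1) = E * lam ^ m / (Nat.factorial m : ℝ) := by
      rw [sizeBiasedPmf, if_neg (Nat.succ_ne_zero m)]
      simp [hE]
    rw [htdef]
    simp only
    rw [hsub, hpmfz, hpmfs, hKval, ha]
    have hfm : ((Nat.factorial m : ℝ)) ≠ 0 := by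
      exact_mod_cast m.factorial_ne_zero
    have hfm1 : ((Nat.factorial (m+1) : ℝ)) ≠ 0 := by
      exact_mod_cast (m+1).factorial_ne_zero
    have hD0 : D ≠ 0 := hD.ne'
    rw [div_pow]
    field_simp
    ring
  -- reindexing the sum
  have ht0 : t 0 = 0 := by
    rw [htdef]
    simp [ztpPmf]
  have hreindex : ∑' k, t k = ∑' m, t (m+1) := by
    refine (Function.Injective.tsum_eq (g := fun m : ℕ => m + 1)
      (fun a b h => by simpa using h) ?_).symm
    intro k hk
    rcases k with _ | m
    · exact absurd ht0 hk
    · exact ⟨m, rfl⟩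
  rw [hreindex]
  simp only [hterm]
  rw [tsum_mul_left]
  congr 1
  -- now: ∑' m, a m * F m = ∫ y in 0..1, besselI1 (2 λ y) * (exp(λ y) - 1)^p
  rw [intervalIntegral.integral_of_le zero_le_one, integral_Ioc_eq_integral_Ioo]
  set f : ℕ → ℝ → ℝ := fun m y => a m * (y ^ (2*m+1) * G y) with hf
  have hfa : ∀ m, a m * F m = ∫ y in Set.Ioo (0:ℝ) 1, f m y := by
    intro m
    simp only [hF, hf]
    rw [← integral_const_mul]
  have hmeas : ∀ m : ℕ, AEStronglyMeasurable (f m)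
      (volume.restrict (Set.Ioo (0:ℝ) 1)) := by
    intro m
    apply Continuous.aestronglyMeasurable
    rw [hf, hG]
    fun_prop
  have hb_sum : Summable (fun m : ℕ => a m * (Real.exp lam - 1) ^ p) :=
    (summable_aux hlam).mul_right _
  have hbound : ∀ m : ℕ, ∀ y ∈ Set.Ioo (0:ℝ) 1,
      ‖f m y‖ ≤ a m * (Real.exp lam - 1) ^ p := by
    intro m y hy
    obtain ⟨hy0, hy1⟩ := hy
    have ha0 : 0 ≤ a m := by rw [ha]; positivity
    have hGy0 : 0 ≤ Real.exp (lam * y) - 1 := by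
      have : (1:ℝ) ≤ Real.exp (lam * y) := by
        rw [← Real.exp_zero]
        exact Real.exp_le_exp.mpr (by positivity)
      linarith
    have hfnn : 0 ≤ f m y := by
      rw [hf, hG]
      positivity
    rw [Real.norm_eq_abs, abs_of_nonneg hfnn, hf, hG]
    have hyp : y ^ (2*m+1) ≤ 1 := pow_le_one₀ (le_of_lt hy0) (le_of_lt hy1)
    have hGle : (Real.exp (lam * y) - 1) ^ p ≤ (Real.exp lam - 1) ^ p := by
      apply pow_le_pow_left₀ hGy0
      have : Real.exp (lam * y) ≤ Real.exp lam :=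
        Real.exp_le_exp.mpr (by nlinarith)
      linarith
    calc a m * (y ^ (2*m+1) * (Real.exp (lam * y) - 1) ^ p)
        ≤ a m * (1 * (Real.exp lam - 1) ^ p) := by
          apply mul_le_mul_of_nonneg_left _ ha0
          apply mul_le_mul hyp hGle (by positivity) one_pos.le
      _ = a m * (Real.exp lam - 1) ^ p := by ring
  have hbnn : ∀ m : ℕ, 0 ≤ a m * (Real.exp lam - 1) ^ p := by
    intro m
    have ha0 : 0 ≤ a m := by rw [ha]; positivity
    have h1e : (1:ℝ) ≤ Real.exp lam := by
      rw [← Real.exp_zero]; exact Real.exp_le_exp.mpr hlam.le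
    have h0 : (0:ℝ) ≤ (Real.exp lam - 1) ^ p := pow_nonneg (by linarith) p
    exact mul_nonneg ha0 h0
  have hfin : ∑' m : ℕ, ∫⁻ y, ‖f m y‖₊ ∂(volume.restrict (Set.Ioo (0:ℝ) 1)) ≠ ⊤ := by
    have hle : ∀ m : ℕ, ∫⁻ y, ‖f m y‖₊ ∂(volume.restrict (Set.Ioo (0:ℝ) 1))
        ≤ ENNReal.ofReal (a m * (Real.exp lam - 1) ^ p) := by
      intro m
      have : ∫⁻ y in Set.Ioo (0:ℝ) 1, (‖f m y‖₊ : ℝ≥0∞)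
          ≤ ∫⁻ _ in Set.Ioo (0:ℝ) 1, ENNReal.ofReal (a m * (Real.exp lam - 1) ^ p) := by
        apply setLIntegral_mono measurable_const
        intro y hy
        rw [← ENNReal.ofReal_coe_nnreal, coe_nnnorm]
        exact ENNReal.ofReal_le_ofReal (hbound m y hy)
      refine this.trans ?_
      rw [setLIntegral_const]
      simp [Real.volume_Ioo]
    refine ne_of_lt (lt_of_le_of_lt (ENNReal.tsum_le_tsum hle) ?_)
    rw [← ENNReal.ofReal_tsum_of_nonneg hbnn hb_sum]
    exact ENNReal.ofReal_lt_top
  have hswap := integral_tsum hmeas hfin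
  simp only [hfa]
  rw [← hswap]
  refine setIntegral_congr_fun measurableSet_Ioo fun y _ => ?_
  rw [← bessel_series lam y, hf, hG]
  simp only
  rw [← tsum_mul_right]
  exact tsum_congr fun m => by ring
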